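/- In the situation of Lemma 5.6 (good quotient of an inverse sequence of compact metric spaces satisfying conditions (p1) and (p2)), the induced map ρ : lim← P → lim← P* is injective: if z = (z_i) and w = (w_i) are distinct threads of P, then there exists k such that z_k and w_k do not belong to a common element of the partition Q_k. -/
import Mathlib


/-- The composition `π_{k+d,k} = π_k ∘ ⋯ ∘ π_{k+d-1}` of the bonding maps of an
inverse sequence. -/
def bondAux {P : ℕ → Type} (π : ∀ n, P (n+1) → P n) (k : ℕ) : ∀ d : ℕ, P (k + d) → P k
  | 0 => id
  | d+1 => fun x => bondAux π k d (π (k + d) x)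

lemma bondAux_continuous {P : ℕ → Type} [∀ i, TopologicalSpace (P i)]
    (π : ∀ n, P (n+1) → P n) (hπ : ∀ i, Continuous (π i)) (k : ℕ) :
    ∀ d : ℕ, Continuous (bondAux π k d)
  | 0 => continuous_id
  | d+1 => (bondAux_continuous π hπ k d).comp (hπ (k + d))

lemma bondAux_thread {P : ℕ → Type} (π : ∀ n, P (n+1) → P n)
    (x : ∀ i, P i) (hx : ∀ i, π i (x (i+1)) = x i) (k : ℕ) :
    ∀ d : ℕ, bondAux π k d (x (k + d)) = x k
  | 0 => rfl
  | d+1 => by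
      show bondAux π k d (π (k + d) (x (k + d + 1))) = x k
      rw [hx (k + d)]; exact bondAux_thread π x hx k d

/-- Injectivity part of Lemma 5.6: under conditions (p1) and (p2), distinct threads of
the inverse sequence become distinct in the quotient sequence: there is an index `k`
at which the two threads do not lie in a common partition class. In particular the
induced map `ρ` of inverse limits is injective. -/
theorem stmt9 (P : ℕ → Type) [∀ i, MetricSpace (P i)] [∀ i, CompactSpace (P i)]
    (π : ∀ i, P (i+1) → P i) (hπ : ∀ i, Continuous (π i))
    (S : ∀ i, P i → P i → Prop) (hEq : ∀ i, Equivalence (S i))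
    (hcl : ∀ i (x : P i), IsClosed {y | S i x y})
    (husc : ∀ i, IsClosedMap (Quot.mk (S i)))
    (h1 : ∀ i x y, S (i+1) x y → S i (π i x) (π i y))
    (h2 : ∀ (k : ℕ) (x : ∀ i, P i),
      (∀ d : ℕ, S (k+d) (π (k+d) (x (k+d+1))) (x (k+d))) →
      ∀ ε > 0, ∃ N, ∀ d ≥ N,
        Metric.diam (bondAux π k d '' {y | S (k+d) (x (k+d)) y}) < ε)
    (z w : {x : ∀ i, P i // ∀ i, π i (x (i+1)) = x i}) (hzw : z ≠ w) :
    ∃ k, ¬ S k (z.1 k) (w.1 k) := by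
  by_contra h
  push_neg at h
  apply hzw
  apply Subtype.ext
  funext k
  -- show dist (z.1 k) (w.1 k) < ε for all ε > 0
  have key : ∀ ε > 0, dist (z.1 k) (w.1 k) < ε := by
    intro ε hε
    obtain ⟨N, hN⟩ := h2 k z.1 (fun d => by rw [z.2 (k+d)]; exact (hEq (k+d)).refl _) ε hε
    have hdiam := hN N le_rfl
    set T := bondAux π k N '' {y | S (k+N) (z.1 (k+N)) y} with hT
    have hcomp : IsCompact T :=
      ((hcl (k+N) (z.1 (k+N))).isCompact).image (bondAux_continuous π hπ k N)
    have hz : z.1 k ∈ T :=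
      ⟨z.1 (k+N), (hEq (k+N)).refl _, bondAux_thread π z.1 z.2 k N⟩
    have hw : w.1 k ∈ T :=
      ⟨w.1 (k+N), h (k+N), bondAux_thread π w.1 w.2 k N⟩
    calc dist (z.1 k) (w.1 k) ≤ Metric.diam T :=
          Metric.dist_le_diam_of_mem hcomp.isBounded hz hw
      _ < ε := hdiam
  have : dist (z.1 k) (w.1 k) ≤ 0 := by
    by_contra hd
    push_neg at hd
    exact lt_irrefl _ (key _ hd)
  exact eq_of_dist_eq_zero (le_antisymm this dist_nonneg)
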